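/- Let Λ > 1, m ≥ 3, let P be an attainability distribution with full support satisfying p_1 = P(A_1 = 1) < (1 − 1/Λ)/2, and fix cardinal utilities v_2 > v_3 > ⋯ > v_m for schools 2,…,m. Then there exists v̄ > v_2 such that for every choice of v_1 ≥ v̄, every optimal ROL ranks school 1 after school m (i.e., school 1 is effectively dropped from the list). -/

import Mathlib

open Finset

/-- An attainability distribution over states `A : Fin (m+2) → Bool`:
nonnegative, sums to one, and the outside option (school `m+2`, the last one)
is always attainable. -/
def IsAttDist {m : ℕ} (P : (Fin (m + 2) → Bool) → ℝ) : Prop :=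
  (∀ A, 0 ≤ P A) ∧ (∑ A : Fin (m + 2) → Bool, P A = 1) ∧
    ∀ A : Fin (m + 2) → Bool, A (Fin.last (m + 1)) = false → P A = 0

/-- Full support: every state in which the outside option is attainable has
strictly positive probability. -/
def FullSupport {m : ℕ} (P : (Fin (m + 2) → Bool) → ℝ) : Prop :=
  ∀ A : Fin (m + 2) → Bool, A (Fin.last (m + 1)) = true → 0 < P A

/-- Match probability of school `s` under ROL `ρ` (where `ρ k` is the school
ranked in position `k`): the probability that `s` is attainable and no school
ranked before `s` is attainable. -/
def matchProb {m : ℕ} (P : (Fin (m + 2) → Bool) → ℝ)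
    (ρ : Equiv.Perm (Fin (m + 2))) (s : Fin (m + 2)) : ℝ :=
  ∑ A : Fin (m + 2) → Bool,
    if A s = true ∧ ∀ ℓ, ℓ < ρ.symm s → A (ρ ℓ) = false then P A else 0

/-- Reference-dependent expected utility of a lottery `f` with loss dominance `Λ`. -/
def utility {m : ℕ} (Λ : ℝ) (v f : Fin (m + 2) → ℝ) : ℝ :=
  (∑ s, f s * v s) -
    Λ * ∑ s, ∑ r ∈ Finset.univ.filter (fun r => s < r), f s * f r * (v s - v r)

/-- An ROL is strictly optimal if its utility strictly exceeds that of every ROL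
inducing a different vector of match probabilities. -/
def StrictlyOptimal {m : ℕ} (Λ : ℝ) (v : Fin (m + 2) → ℝ)
    (P : (Fin (m + 2) → Bool) → ℝ) (ρ : Equiv.Perm (Fin (m + 2))) : Prop :=
  ∀ ρ' : Equiv.Perm (Fin (m + 2)), matchProb P ρ' ≠ matchProb P ρ →
    utility Λ v (matchProb P ρ') < utility Λ v (matchProb P ρ)

/-- An ROL is (weakly) optimal if its utility is weakly greater than that of
every other ROL. -/
def Optimal {m : ℕ} (Λ : ℝ) (v : Fin (m + 2) → ℝ)
    (P : (Fin (m + 2) → Bool) → ℝ) (ρ : Equiv.Perm (Fin (m + 2))) : Prop :=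
  ∀ ρ' : Equiv.Perm (Fin (m + 2)),
    utility Λ v (matchProb P ρ') ≤ utility Λ v (matchProb P ρ)

/-- Top-rank monotonicity of an ROL `ρ` (`ρ k` = school at rank `k`; lower
school label = more preferred). -/
def TopRankMonotone {m : ℕ} (ρ : Equiv.Perm (Fin (m + 2))) : Prop :=
  (∀ k i : Fin (m + 2), ρ k < ρ 0 → ρ i < ρ k → k < i) ∧
    ∀ l j : Fin (m + 2), ρ 0 < ρ l → ρ j < ρ l → j < l

lemma matchProb_nonneg {m : ℕ} {P : (Fin (m + 2) → Bool) → ℝ} (hP : IsAttDist P)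
    (ρ : Equiv.Perm (Fin (m + 2))) (s : Fin (m + 2)) : 0 ≤ matchProb P ρ s := by
  refine Finset.sum_nonneg fun A _ => ?_
  split
  · exact hP.1 A
  · exact le_refl 0

lemma sum_matchProb {m : ℕ} {P : (Fin (m + 2) → Bool) → ℝ} (hP : IsAttDist P)
    (ρ : Equiv.Perm (Fin (m + 2))) : ∑ s, matchProb P ρ s = 1 := by
  unfold matchProb
  rw [Finset.sum_comm, ← hP.2.1]
  refine Finset.sum_congr rfl fun A _ => ?_
  by_cases hA : A (Fin.last (m + 1)) = true
  · have hne : (univ.filter (fun k => A (ρ k) = true)).Nonempty :=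
      ⟨ρ.symm (Fin.last (m + 1)), by simp [hA]⟩
    obtain ⟨k0, hk0S, hmin⟩ :=
      Finset.exists_min_image (univ.filter fun k => A (ρ k) = true) id hne
    have hk0mem : A (ρ k0) = true := by simpa using hk0S
    have key : ∀ s : Fin (m + 2),
        ((A s = true ∧ ∀ ℓ, ℓ < ρ.symm s → A (ρ ℓ) = false) ↔ ρ.symm s = k0) := by
      intro s
      constructor
      · rintro ⟨h1, h2⟩
        have hmem : ρ.symm s ∈ univ.filter (fun k => A (ρ k) = true) := by simp [h1]
        have hle : k0 ≤ ρ.symm s := hmin _ hmem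
        rcases eq_or_lt_of_le hle with h | h
        · exact h.symm
        · have := h2 k0 h
          rw [hk0mem] at this
          exact absurd this (by simp)
      · intro h
        refine ⟨by rw [← Equiv.apply_symm_apply ρ s, h]; exact hk0mem, fun ℓ hℓ => ?_⟩
        by_contra hcon
        have hℓS : ℓ ∈ univ.filter (fun k => A (ρ k) = true) := by
          simp only [mem_filter, mem_univ, true_and]
          exact (Bool.not_eq_false _).mp hcon
        have h2 := hmin _ hℓS
        rw [h] at hℓ
        exact absurd (lt_of_le_of_lt h2 hℓ) (lt_irrefl _)
    calc ∑ s, (if A s = true ∧ ∀ ℓ, ℓ < ρ.symm s → A (ρ ℓ) = false then P A else 0)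
        = ∑ s, (if ρ.symm s = k0 then P A else 0) := by
          refine Finset.sum_congr rfl fun s _ => ?_
          simp only [key s]
      _ = ∑ k, (if k = k0 then P A else 0) := by
          rw [← Equiv.sum_comp ρ (fun s => if ρ.symm s = k0 then P A else 0)]
          simp
      _ = P A := by rw [Finset.sum_ite_eq' univ k0 (fun _ => P A)]; simp
  · have hPA : P A = 0 := hP.2.2 A (by simpa using hA)
    rw [hPA]
    refine Finset.sum_eq_zero fun s _ => ?_
    split <;> rfl

lemma matchProb_le_p {m : ℕ} {P : (Fin (m + 2) → Bool) → ℝ} (hP : IsAttDist P)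
    (ρ : Equiv.Perm (Fin (m + 2))) (s : Fin (m + 2)) :
    matchProb P ρ s ≤ ∑ A : Fin (m + 2) → Bool, if A s = true then P A else 0 := by
  refine Finset.sum_le_sum fun A _ => ?_
  by_cases h : A s = true ∧ ∀ ℓ, ℓ < ρ.symm s → A (ρ ℓ) = false
  · rw [if_pos h, if_pos h.1]
  · rw [if_neg h]
    split
    · exact hP.1 A
    · exact le_refl 0

/-- the special state: only school 0 and the outside option attainable -/
def Astar (m : ℕ) : Fin (m + 2) → Bool := fun i => decide (i = 0 ∨ i = Fin.last (m + 1))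

lemma matchProb_ge {m : ℕ} {P : (Fin (m + 2) → Bool) → ℝ} (hP : IsAttDist P)
    (ρ : Equiv.Perm (Fin (m + 2))) (h : ρ.symm 0 < ρ.symm (Fin.last (m + 1))) :
    P (Astar m) ≤ matchProb P ρ 0 := by
  unfold matchProb
  have hcond : (Astar m) 0 = true ∧ ∀ ℓ, ℓ < ρ.symm 0 → (Astar m) (ρ ℓ) = false := by
    refine ⟨by simp [Astar], fun ℓ hℓ => ?_⟩
    simp only [Astar, decide_eq_false_iff_not, not_or]
    constructor
    · intro hc
      have : ℓ = ρ.symm 0 := by rw [← hc]; simp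
      rw [this] at hℓ; exact lt_irrefl _ hℓ
    · intro hc
      have : ℓ = ρ.symm (Fin.last (m + 1)) := by rw [← hc]; simp
      rw [this] at hℓ
      exact absurd (lt_trans hℓ h) (lt_irrefl _)
  calc P (Astar m) = if (Astar m) 0 = true ∧ ∀ ℓ, ℓ < ρ.symm 0 → (Astar m) (ρ ℓ) = false
        then P (Astar m) else 0 := by rw [if_pos hcond]
    _ ≤ _ := by
        refine Finset.single_le_sum (f := fun A => if A 0 = true ∧ ∀ ℓ, ℓ < ρ.symm 0 →
          A (ρ ℓ) = false then P A else 0) (fun A _ => ?_) (mem_univ (Astar m))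
        show 0 ≤ (if A 0 = true ∧ ∀ ℓ, ℓ < ρ.symm 0 → A (ρ ℓ) = false then P A else 0)
        split
        · exact hP.1 A
        · exact le_refl 0

lemma matchProb_drop {m : ℕ} {P : (Fin (m + 2) → Bool) → ℝ} (hP : IsAttDist P) :
    matchProb P (Equiv.swap 0 (Fin.last (m + 1))) 0 = 0 := by
  unfold matchProb
  refine Finset.sum_eq_zero fun A _ => ?_
  by_cases h : A 0 = true ∧ ∀ ℓ, ℓ < (Equiv.swap 0 (Fin.last (m + 1))).symm 0 →
      A ((Equiv.swap 0 (Fin.last (m + 1))) ℓ) = false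
  · rw [if_pos h]
    have hlast : (0 : Fin (m + 2)) < Fin.last (m + 1) := by
      simp [Fin.lt_def]
    have h0 := h.2 0 (by simpa using hlast)
    rw [Equiv.swap_apply_left] at h0
    exact hP.2.2 A h0
  · rw [if_neg h]

lemma utility_update' {m : ℕ} (Λ v1 : ℝ) (w f : Fin (m + 2) → ℝ) :
    utility Λ (Function.update w 0 v1) f
      = utility Λ (Function.update w 0 0) f
        + v1 * f 0 * (1 - Λ * ∑ r ∈ univ.filter (fun r => (0 : Fin (m + 2)) < r), f r) := by
  unfold utility
  simp only [Function.update_apply]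
  have h1 : ∑ s : Fin (m + 2), f s * (if s = 0 then v1 else w s)
      = (∑ s : Fin (m + 2), f s * (if s = 0 then (0:ℝ) else w s)) + v1 * f 0 := by
    have : ∀ s : Fin (m + 2), f s * (if s = 0 then v1 else w s)
        = f s * (if s = 0 then (0:ℝ) else w s) + (if s = 0 then v1 * f s else 0) := by
      intro s; split <;> ring
    rw [Finset.sum_congr rfl fun s _ => this s, Finset.sum_add_distrib,
      Finset.sum_ite_eq' univ 0 (fun s => v1 * f s)]
    simp
  have h2 : ∀ s : Fin (m + 2),
      ∑ r ∈ univ.filter (fun r => s < r), f s * f r * ((if s = 0 then v1 else w s) - (if r = 0 then v1 else w r))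
      = (∑ r ∈ univ.filter (fun r => s < r), f s * f r * ((if s = 0 then (0:ℝ) else w s) - (if r = 0 then (0:ℝ) else w r)))
        + (if s = 0 then v1 * f s * ∑ r ∈ univ.filter (fun r => s < r), f r else 0) := by
    intro s
    have hterm : ∀ r ∈ univ.filter (fun r => s < r),
        f s * f r * ((if s = 0 then v1 else w s) - (if r = 0 then v1 else w r))
        = f s * f r * ((if s = 0 then (0:ℝ) else w s) - (if r = 0 then (0:ℝ) else w r))
          + (if s = 0 then v1 * f s * f r else 0) := by
      intro r hr
      have hr0 : r ≠ 0 := by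
        rw [mem_filter] at hr
        exact ne_of_gt (lt_of_le_of_lt (Fin.zero_le s) hr.2)
      rw [if_neg hr0, if_neg hr0]
      split <;> ring
    rw [Finset.sum_congr rfl hterm, Finset.sum_add_distrib]
    congr 1
    split
    · rw [Finset.mul_sum]
    · exact Finset.sum_eq_zero fun r _ => rfl
  rw [h1, Finset.sum_congr rfl fun s _ => h2 s, Finset.sum_add_distrib,
    Finset.sum_ite_eq' univ 0
      (fun s => v1 * f s * ∑ r ∈ univ.filter (fun r => s < r), f r)]
  simp only [mem_univ, if_pos]
  ring

lemma utility_le_bound {m : ℕ} {Λ : ℝ} (hΛ : 0 ≤ Λ) (v f : Fin (m + 2) → ℝ)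
    (hf0 : ∀ s, 0 ≤ f s) (hf1 : ∀ s, f s ≤ 1) :
    utility Λ v f ≤ (∑ s, |v s|)
      + Λ * ∑ s, ∑ r ∈ univ.filter (fun r => s < r), |v s - v r| := by
  unfold utility
  have h1 : ∑ s, f s * v s ≤ ∑ s, |v s| := by
    refine Finset.sum_le_sum fun s _ => ?_
    nlinarith [le_abs_self (v s), neg_abs_le (v s), abs_nonneg (v s), hf0 s, hf1 s]
  have h2 : -(∑ s, ∑ r ∈ univ.filter (fun r => s < r), |v s - v r|)
      ≤ ∑ s, ∑ r ∈ univ.filter (fun r => s < r), f s * f r * (v s - v r) := by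
    rw [← Finset.sum_neg_distrib]
    refine Finset.sum_le_sum fun s _ => ?_
    rw [← Finset.sum_neg_distrib]
    refine Finset.sum_le_sum fun r _ => ?_
    have hab : 0 ≤ f s * f r := mul_nonneg (hf0 s) (hf0 r)
    have hab1 : f s * f r ≤ 1 := mul_le_one₀ (hf1 s) (hf0 r) (hf1 r)
    rcases le_or_gt 0 (v s - v r) with ht | ht
    · have : -|v s - v r| ≤ 0 := neg_nonpos.mpr (abs_nonneg _)
      nlinarith
    · rw [abs_of_neg ht]
      nlinarith
  nlinarith [mul_le_mul_of_nonneg_left h2 hΛ]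

/-- with `Λ > 1`, at least three schools, a full-support
attainability distribution with `p₁ < (1 - 1/Λ)/2`, and fixed utilities
`v₂ > v₃ > ⋯ > v_m` for the remaining schools, there is a bound `v̄ > v₂` such
that whenever `v₁ ≥ v̄`, every optimal ROL ranks school 1 after the outside
option (school `m`, the last one), i.e. effectively drops school 1. -/
theorem stmt_16 (m : ℕ) (Λ : ℝ) (hΛ : 1 < Λ)
    (P : (Fin (m + 1 + 2) → Bool) → ℝ) (hP : IsAttDist P) (hfull : FullSupport P)
    (hp1 : (∑ A : Fin (m + 1 + 2) → Bool, if A 0 = true then P A else 0) <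
      (1 - 1 / Λ) / 2)
    (w : Fin (m + 1 + 2) → ℝ)
    (hw : ∀ i j : Fin (m + 1 + 2), 0 < i → i < j → w j < w i) :
    ∃ vbar : ℝ, w 1 < vbar ∧
      ∀ v1 : ℝ, vbar ≤ v1 →
        ∀ ρ : Equiv.Perm (Fin (m + 1 + 2)),
          Optimal Λ (Function.update w 0 v1) P ρ →
            ρ.symm (Fin.last (m + 1 + 1)) < ρ.symm 0 := by
  have hΛ0 : (0:ℝ) < Λ := by linarith
  set w0 : Fin (m+1+2) → ℝ := Function.update w 0 0 with hw0
  set σ : Equiv.Perm (Fin (m+1+2)) := Equiv.swap 0 (Fin.last (m+1+1)) with hσ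
  set C : ℝ := utility Λ w0 (matchProb P σ) with hC
  set M : ℝ := (∑ s, |w0 s|)
    + Λ * ∑ s, ∑ r ∈ univ.filter (fun r => s < r), |w0 s - w0 r| with hM
  have hε : 0 < P (Astar (m+1)) := hfull _ (by simp [Astar])
  set ε := P (Astar (m+1)) with hεdef
  set c : ℝ := ε * (Λ - 1) / 2 with hc
  have hcpos : 0 < c := by
    rw [hc]; apply div_pos (mul_pos hε (by linarith)); norm_num
  refine ⟨max (w 1 + 1) (max 1 ((M - C)/c + 1)),
    lt_of_lt_of_le (lt_add_one _) (le_max_left _ _), ?_⟩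
  intro v1 hv1 ρ hopt
  by_contra hcon
  push_neg at hcon
  have hne : ρ.symm 0 ≠ ρ.symm (Fin.last (m+1+1)) := by
    intro h
    have h2 : (0 : Fin (m+1+2)) = Fin.last (m+1+1) := ρ.symm.injective h
    exact absurd h2 (by simp [Fin.ext_iff])
  have hbad : ρ.symm 0 < ρ.symm (Fin.last (m+1+1)) := lt_of_le_of_ne hcon hne
  set f := matchProb P ρ with hf
  have hf0nn : ∀ s, 0 ≤ f s := fun s => matchProb_nonneg hP ρ s
  have hsum1 : ∑ s, f s = 1 := sum_matchProb hP ρ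
  have hf1 : ∀ s, f s ≤ 1 := by
    intro s
    calc f s ≤ ∑ t, f t := Finset.single_le_sum (fun t _ => hf0nn t) (mem_univ s)
      _ = 1 := hsum1
  have hεle : ε ≤ f 0 := matchProb_ge hP ρ hbad
  have hf0lt : f 0 < (1 - 1/Λ)/2 := lt_of_le_of_lt (matchProb_le_p hP ρ 0) hp1
  have hfilter : (univ.filter (fun r : Fin (m+1+2) => 0 < r)) = univ.erase 0 := by
    ext r; simp [Fin.pos_iff_ne_zero]
  have hsumr : ∑ r ∈ univ.filter (fun r : Fin (m+1+2) => 0 < r), f r = 1 - f 0 := by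
    rw [hfilter, Finset.sum_erase_eq_sub (mem_univ 0), hsum1]
  have hΛinv : Λ * (1/Λ) = 1 := mul_one_div_cancel (ne_of_gt hΛ0)
  have hX : 1 - Λ * (1 - f 0) ≤ -((Λ - 1)/2) := by
    nlinarith [mul_lt_mul_of_pos_left hf0lt hΛ0]
  have hb : f 0 * (1 - Λ * (1 - f 0)) ≤ -c := by
    calc f 0 * (1 - Λ * (1 - f 0)) ≤ ε * (1 - Λ * (1 - f 0)) :=
          mul_le_mul_of_nonpos_right hεle (le_trans hX (by linarith))
      _ ≤ ε * (-((Λ - 1)/2)) := mul_le_mul_of_nonneg_left hX (le_of_lt hε)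
      _ = -c := by rw [hc]; ring
  have hv11 : (1:ℝ) ≤ v1 := le_trans (le_trans (le_max_left _ _) (le_max_right _ _)) hv1
  have hv1c : (M - C)/c + 1 ≤ v1 :=
    le_trans (le_trans (le_max_right _ _) (le_max_right _ _)) hv1
  have hUρ : utility Λ (Function.update w 0 v1) f ≤ M - c * v1 := by
    rw [utility_update', hsumr]
    have h1 : utility Λ w0 f ≤ M := by
      rw [hM, hw0]; exact utility_le_bound (le_of_lt hΛ0) _ f hf0nn hf1
    have h2 : v1 * f 0 * (1 - Λ * (1 - f 0)) ≤ -(c * v1) := by nlinarith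
    rw [hw0] at h1
    linarith
  have hCbig : M - c * v1 < C := by
    have h3 : c * ((M - C)/c + 1) ≤ c * v1 := mul_le_mul_of_nonneg_left hv1c (le_of_lt hcpos)
    have hcc : c * ((M - C)/c) = M - C := by field_simp
    nlinarith
  have hUσ : utility Λ (Function.update w 0 v1) (matchProb P σ) = C := by
    rw [utility_update']
    have hd : matchProb P σ 0 = 0 := matchProb_drop hP
    rw [hd, hC, hw0]
    ring
  have hle := hopt σ
  rw [hUσ] at hle
  linarith
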